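/- Let T, n, p ∈ ℕ, let Xᵗ ∈ ℝ^{n×p} and Yᵗ ∈ ℝⁿ for t = 1,…,T, and let μ, λ > 0 with μ > √T·λ. Then every global minimizer (Θ_c*, Θ_s*) of the Dirty-model objective F(Θ_c, Θ_s) = Σ_{t=1}^T (1/(2n))‖Xᵗ(θ_cᵗ + θ_sᵗ) − Yᵗ‖₂² + μ‖Θ_c‖_{2,1} + λ‖Θ_s‖₁ satisfies Θ_c* = 0. -/

import Mathlib

open scoped BigOperators

/-- Dirty multi-task objective:
`F(Θc, Θs) = ∑ t, (1/(2n)) ‖Xᵗ (θcᵗ + θsᵗ) - Yᵗ‖₂² + μ ‖Θc‖_{2,1} + λ ‖Θs‖₁`. -/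
noncomputable def dirtyObj {T n p : ℕ} (X : Fin T → Matrix (Fin n) (Fin p) ℝ)
    (Y : Fin T → Fin n → ℝ) (μ lam : ℝ)
    (Θc Θs : Matrix (Fin p) (Fin T) ℝ) : ℝ :=
  (∑ t, (1 / (2 * (n : ℝ))) *
      ∑ i, ((X t).mulVec (fun j => Θc j t + Θs j t) i - Y t i) ^ 2)
    + μ * ∑ j, Real.sqrt (∑ t, (Θc j t) ^ 2)
    + lam * ∑ j, ∑ t, |Θs j t|

lemma row_l1_le_sqrtT_l2 {T : ℕ} (a : Fin T → ℝ) :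
    ∑ t, |a t| ≤ Real.sqrt T * Real.sqrt (∑ t, (a t) ^ 2) := by
  have hcs : (∑ t, |a t|) ^ 2 ≤ (T : ℝ) * ∑ t, (a t) ^ 2 := by
    have := sq_sum_le_card_mul_sum_sq (s := (Finset.univ : Finset (Fin T)))
      (f := fun t => |a t|)
    simpa [sq_abs] using this
  have h1 : 0 ≤ ∑ t, |a t| := Finset.sum_nonneg fun _ _ => abs_nonneg _
  have h2 : Real.sqrt ((∑ t, |a t|) ^ 2) ≤ Real.sqrt ((T : ℝ) * ∑ t, (a t) ^ 2) :=
    Real.sqrt_le_sqrt hcs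
  rw [Real.sqrt_sq h1, Real.sqrt_mul (by positivity)] at h2
  exact h2

/-- If `μ > √T * λ`, every global minimizer `(Θc⋆, Θs⋆)` of the Dirty-model objective
satisfies `Θc⋆ = 0` (the model reduces to an independent Lasso estimator). -/
theorem dirty_mu_gt_sqrtT_lam_common_part_zero {T n p : ℕ}
    (X : Fin T → Matrix (Fin n) (Fin p) ℝ) (Y : Fin T → Fin n → ℝ)
    (μ lam : ℝ) (hμ : 0 < μ) (hlam : 0 < lam) (h : Real.sqrt T * lam < μ) :
    ∀ Θc Θs : Matrix (Fin p) (Fin T) ℝ,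
      (∀ Θc' Θs' : Matrix (Fin p) (Fin T) ℝ,
          dirtyObj X Y μ lam Θc Θs ≤ dirtyObj X Y μ lam Θc' Θs') →
      Θc = 0 := by
  intro Θc Θs hmin
  have key := hmin 0 (Θs + Θc)
  simp only [dirtyObj, Matrix.add_apply, Matrix.zero_apply, zero_add] at key
  have hvec : ∀ t : Fin T, (fun j => Θs j t + Θc j t) = fun j => Θc j t + Θs j t := by
    intro t; funext j; ring
  simp only [hvec] at key
  -- set S := sum of row norms of Θc
  set S : ℝ := ∑ j, Real.sqrt (∑ t, (Θc j t) ^ 2) with hS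
  have hSnn : 0 ≤ S := Finset.sum_nonneg fun j _ => Real.sqrt_nonneg _
  -- key simplifies to μ * S + lam * ∑∑|Θs| ≤ lam * ∑∑|Θs+Θc|
  have key2 : μ * S + lam * ∑ j, ∑ t, |Θs j t| ≤
      (0:ℝ) + lam * ∑ j, ∑ t, |Θs j t + Θc j t| := by
    have := key
    have h0 : (∑ j : Fin p, Real.sqrt (∑ t : Fin T, (0:ℝ) ^ 2)) = 0 := by
      simp
    rw [h0] at this
    linarith
  have tri : ∀ j t, |Θs j t + Θc j t| ≤ |Θs j t| + |Θc j t| := fun j t => abs_add_le _ _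
  have key3 : μ * S ≤ lam * ∑ j, ∑ t, |Θc j t| := by
    have hsum : (∑ j, ∑ t, |Θs j t + Θc j t|) ≤
        (∑ j, ∑ t, |Θs j t|) + ∑ j, ∑ t, |Θc j t| := by
      rw [← Finset.sum_add_distrib]
      refine Finset.sum_le_sum fun j _ => ?_
      rw [← Finset.sum_add_distrib]
      exact Finset.sum_le_sum fun t _ => tri j t
    nlinarith [key2]
  have key4 : (∑ j, ∑ t, |Θc j t|) ≤ Real.sqrt T * S := by
    rw [hS, Finset.mul_sum]
    exact Finset.sum_le_sum fun j _ => row_l1_le_sqrtT_l2 (fun t => Θc j t)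
  have key5 : μ * S ≤ Real.sqrt T * lam * S := by
    calc μ * S ≤ lam * (Real.sqrt T * S) := key3.trans (by
          exact mul_le_mul_of_nonneg_left key4 hlam.le)
      _ = Real.sqrt T * lam * S := by ring
  have hS0 : S = 0 := by nlinarith
  -- each row norm is zero
  have hrow : ∀ j, Real.sqrt (∑ t, (Θc j t) ^ 2) = 0 := by
    intro j
    have := (Finset.sum_eq_zero_iff_of_nonneg
      (fun j _ => Real.sqrt_nonneg (∑ t, (Θc j t) ^ 2))).mp hS0
    exact this j (Finset.mem_univ j)
  funext j t
  have hsq : (∑ t, (Θc j t) ^ 2) = 0 := by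
    have hnn : 0 ≤ ∑ t, (Θc j t) ^ 2 := Finset.sum_nonneg fun _ _ => sq_nonneg _
    have := hrow j
    nlinarith [Real.sq_sqrt hnn, Real.sqrt_nonneg (∑ t, (Θc j t) ^ 2)]
  have := (Finset.sum_eq_zero_iff_of_nonneg (fun t _ => sq_nonneg (Θc j t))).mp hsq
  have ht := this t (Finset.mem_univ t)
  have : Θc j t = 0 := by nlinarith
  simpa using this
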